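/- Let (d, Q, E) be a VASS, C, C' ⊆ {1,…,d}, q, q' ∈ Q (q' non-isolated, i.e. incident to some arc), v ∈ ℕ^C, v' ∈ ℕ^{C'}, v̄, δ̄ ∈ ℕ^{C̄}, v̄', δ̄' ∈ ℕ^{C̄'}, Δ ∈ ℕ^C, Δ' ∈ ℕ^{C'}, Δ̄ ∈ ℤ^{C̄}, Δ̄' ∈ ℤ^{C̄'}. Suppose there are: a pseudo-run π₀ from (q, v ⊕ v̄) to (q', v' ⊕ v̄'); a pseudo-run π₁ from (q, v ⊕ (v̄ + δ̄)) to (q', v' ⊕ (v̄' + δ̄')); a pseudo-run π from (q, v ⊕ (v̄ + δ̄)) to (q, (v + Δ) ⊕ (v̄ + δ̄ + Δ̄)); a pseudo-run π' from (q', (v' + Δ') ⊕ (v̄' + δ̄' + Δ̄')) to (q', v' ⊕ (v̄' + δ̄')); and fold(π₁) − fold(π₀) − fold(π) − fold(π') ≥ 1 on every arc of E. Then there is a pseudo-run from (q', Δ ⊕ (δ̄ + Δ̄)) to (q', Δ' ⊕ (δ̄' + Δ̄')). -/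

import Mathlib

/-- Vectors in `ℤ^d`. -/
abbrev Vec (d : ℕ) : Type := Fin d → ℤ

/-- An arc of a `d`-dimensional VASS with states `Q`. -/
abbrev Arc (Q : Type) (d : ℕ) : Type := Q × Vec d × Q

/-- `IsRunOn E S π q v q' v'`: the list of arcs `π` (all belonging to `E`) forms a
pseudo-run from `(q, v)` to `(q', v')`, all of whose vectors (including endpoints)
are nonnegative on every coordinate in `S`.  Taking `S = ∅` gives pseudo-runs,
`S = Set.univ` gives runs, and `S = ↑C` gives `C`-runs. -/
inductive IsRunOn {Q : Type} {d : ℕ} (E : Finset (Arc Q d)) (S : Set (Fin d)) :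
    List (Arc Q d) → Q → Vec d → Q → Vec d → Prop
  | nil (q : Q) (v : Vec d) (hv : ∀ i ∈ S, 0 ≤ v i) :
      IsRunOn E S [] q v q v
  | cons (q q' q'' : Q) (v v'' z : Vec d) (π : List (Arc Q d))
      (hv : ∀ i ∈ S, 0 ≤ v i) (he : (q, z, q') ∈ E)
      (ht : IsRunOn E S π q' (v + z) q'' v'') :
      IsRunOn E S ((q, z, q') :: π) q v q'' v''

/-- Glueing: `glue C v w` agrees with `v` on coordinates in `C` and with `w` outside `C`. -/
def glue {d : ℕ} (C : Finset (Fin d)) (v w : Vec d) : Vec d :=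
  fun i => if i ∈ C then v i else w i

namespace ClaimAux
variable {Q : Type} {d : ℕ} [DecidableEq Q]

def IsWalk : List (Arc Q d) → Q → Q → Prop
  | [], a, b => a = b
  | e :: t, a, b => e.1 = a ∧ IsWalk t e.2.2 b

def disp (π : List (Arc Q d)) : Vec d := (π.map (fun e => e.2.1)).sum

theorem isWalk_append {π₁ π₂ : List (Arc Q d)} {a b : Q} :
    IsWalk (π₁ ++ π₂) a b ↔ ∃ m, IsWalk π₁ a m ∧ IsWalk π₂ m b := by
  induction π₁ generalizing a with
  | nil => simp [IsWalk]
  | cons e t ih => simp [IsWalk, ih, and_assoc]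

theorem walk_end_mem {w : List (Arc Q d)} {a b : Q} (h : IsWalk w a b) :
    b ∈ a :: w.map (fun e => e.2.2) := by
  induction w generalizing a with
  | nil => simp [IsWalk] at h; simp [h]
  | cons e t ih =>
    obtain ⟨-, h2⟩ := h
    have := ih h2
    simp at this ⊢
    tauto

set_option linter.unusedSectionVars false

def outL (w : List (Arc Q d)) (p : Q) : ℕ := w.countP (fun e => decide (e.1 = p))
def inL (w : List (Arc Q d)) (p : Q) : ℕ := w.countP (fun e => decide (e.2.2 = p))
def outM (g : Multiset (Arc Q d)) (p : Q) : ℕ := g.countP (fun e => e.1 = p)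
def inM (g : Multiset (Arc Q d)) (p : Q) : ℕ := g.countP (fun e => e.2.2 = p)

theorem outM_coe (w : List (Arc Q d)) (p : Q) : outM (w : Multiset (Arc Q d)) p = outL w p :=
  Multiset.coe_countP _ _
theorem inM_coe (w : List (Arc Q d)) (p : Q) : inM (w : Multiset (Arc Q d)) p = inL w p :=
  Multiset.coe_countP _ _

theorem walk_imbalance {w : List (Arc Q d)} {a b : Q} (h : IsWalk w a b) (p : Q) :
    outL w p + (if b = p then 1 else 0) = inL w p + (if a = p then 1 else 0) := by
  induction w generalizing a with
  | nil => simp only [IsWalk] at h; simp [outL, inL, h]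
  | cons e t ih =>
    obtain ⟨h1, h2⟩ := h
    have H := ih h2
    simp only [outL, inL, List.countP_cons, decide_eq_true_eq] at H ⊢
    subst h1
    split_ifs at H ⊢ <;> omega

def Balanced (g : Multiset (Arc Q d)) : Prop := ∀ p, outM g p = inM g p

theorem outM_cons (e : Arc Q d) (g : Multiset (Arc Q d)) (p : Q) :
    outM (e ::ₘ g) p = outM g p + (if e.1 = p then 1 else 0) := by
  simp [outM, Multiset.countP_cons]

theorem inM_cons (e : Arc Q d) (g : Multiset (Arc Q d)) (p : Q) :
    inM (e ::ₘ g) p = inM g p + (if e.2.2 = p then 1 else 0) := by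
  simp [inM, Multiset.countP_cons]

/-- Extraction of a walk from an imbalanced multiset: from `b` one can reach `a`. -/
theorem extract_walk : ∀ (n : ℕ) (g : Multiset (Arc Q d)), g.card ≤ n → ∀ (a b : Q),
    (∀ p, outM g p + (if a = p then 1 else 0) = inM g p + (if b = p then 1 else 0)) →
    ∃ w : List (Arc Q d), IsWalk w b a ∧ (w : Multiset (Arc Q d)) ≤ g := by
  intro n
  induction n with
  | zero =>
    intro g hg a b hinv
    rcases eq_or_ne b a with rfl | hne
    · exact ⟨[], rfl, by simp⟩
    · exfalso
      have h0 : g = 0 := by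
        rw [← Multiset.card_eq_zero]; omega
      subst h0
      have := hinv b
      simp [outM, inM, hne] at this
      exact hne this.symm
  | succ n ih =>
    intro g hg a b hinv
    rcases eq_or_ne b a with rfl | hne
    · exact ⟨[], rfl, by simp⟩
    · have h1 := hinv b
      have hb : 0 < outM g b := by
        rw [if_pos rfl, if_neg (Ne.symm hne)] at h1; omega
      obtain ⟨e, he, hep⟩ := Multiset.countP_pos.mp hb
      obtain ⟨g', rfl⟩ := Multiset.exists_cons_of_mem he
      have hinv' : ∀ p, outM g' p + (if a = p then 1 else 0)
          = inM g' p + (if e.2.2 = p then 1 else 0) := by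
        intro p
        have H := hinv p
        rw [outM_cons, inM_cons, hep] at H
        split_ifs at H ⊢ <;> omega
      have hcard : g'.card ≤ n := by
        have h2 := Multiset.card_cons e g'
        omega
      obtain ⟨w, hw, hwle⟩ := ih g' hcard a e.2.2 hinv'
      exact ⟨e :: w, ⟨hep, hw⟩, by simpa using Multiset.cons_le_cons e hwle⟩

/-- Extract a nonempty cycle at `p` from a balanced multiset having an arc out of `p`. -/
theorem extract_cycle {g : Multiset (Arc Q d)} (hbal : Balanced g) {e : Arc Q d}
    (he : e ∈ g) (hep : e.1 = p) :
    ∃ τ : List (Arc Q d), τ ≠ [] ∧ IsWalk τ p p ∧ (τ : Multiset (Arc Q d)) ≤ g := by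
  obtain ⟨g', rfl⟩ := Multiset.exists_cons_of_mem he
  have hinv : ∀ r, outM g' r + (if p = r then 1 else 0)
      = inM g' r + (if e.2.2 = r then 1 else 0) := by
    intro r
    have H := hbal r
    rw [outM_cons, inM_cons, hep] at H
    split_ifs at H ⊢ <;> omega
  obtain ⟨w, hw, hwle⟩ := extract_walk g'.card g' le_rfl p e.2.2 hinv
  exact ⟨e :: w, by simp, ⟨hep, hw⟩, by simpa using Multiset.cons_le_cons e hwle⟩

theorem outM_sub {g h : Multiset (Arc Q d)} (hle : h ≤ g) (p : Q) :
    outM (g - h) p = outM g p - outM h p := by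
  obtain ⟨k, rfl⟩ := Multiset.le_iff_exists_add.mp hle
  simp [outM, Multiset.countP_add]

theorem inM_sub {g h : Multiset (Arc Q d)} (hle : h ≤ g) (p : Q) :
    inM (g - h) p = inM g p - inM h p := by
  obtain ⟨k, rfl⟩ := Multiset.le_iff_exists_add.mp hle
  simp [inM, Multiset.countP_add]

theorem outM_le_of_le {g h : Multiset (Arc Q d)} (hle : h ≤ g) (p : Q) :
    outM h p ≤ outM g p := Multiset.countP_le_of_le _ hle

theorem inM_le_of_le {g h : Multiset (Arc Q d)} (hle : h ≤ g) (p : Q) :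
    inM h p ≤ inM g p := Multiset.countP_le_of_le _ hle

/-- A closed walk is balanced. -/
theorem closed_walk_balanced {τ : List (Arc Q d)} {p : Q} (h : IsWalk τ p p) :
    Balanced (τ : Multiset (Arc Q d)) := by
  intro r
  have := walk_imbalance h r
  rw [outM_coe, inM_coe]
  omega

theorem walk_decomp {σ : List (Arc Q d)} {s s' p : Q} (h : IsWalk σ s s')
    (hp : p ∈ s :: σ.map (fun e => e.2.2)) :
    ∃ σ₁ σ₂, σ = σ₁ ++ σ₂ ∧ IsWalk σ₁ s p ∧ IsWalk σ₂ p s' := by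
  induction σ generalizing s with
  | nil =>
    simp at hp
    subst hp
    exact ⟨[], [], by simp, rfl, h⟩
  | cons e t ih =>
    rcases eq_or_ne p s with rfl | hne
    · exact ⟨[], e :: t, rfl, rfl, h⟩
    · obtain ⟨h1, h2⟩ := h
      have hp' : p ∈ e.2.2 :: t.map (fun e => e.2.2) := by
        simp at hp ⊢; tauto
      obtain ⟨σ₁, σ₂, rfl, hw1, hw2⟩ := ih h2 hp'
      exact ⟨e :: σ₁, σ₂, rfl, ⟨h1, hw1⟩, hw2⟩

theorem arc_src_mem {σ : List (Arc Q d)} {s s' : Q} {e : Arc Q d} (he : e ∈ σ)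
    (h : IsWalk σ s s') : e.1 ∈ s :: σ.map (fun e => e.2.2) := by
  obtain ⟨l₁, l₂, rfl⟩ := List.append_of_mem he
  obtain ⟨m, hm1, hm2⟩ := isWalk_append.mp h
  obtain ⟨he1, -⟩ := hm2
  rw [he1]
  have h2 := walk_end_mem hm1
  rw [List.mem_cons] at h2
  rcases h2 with h2 | h2
  · rw [h2]; exact List.mem_cons_self
  · exact List.mem_cons_of_mem _ (by rw [List.map_append]; exact List.mem_append_left _ h2)

theorem walk_iff {P : Q → Prop} {W : List (Arc Q d)} {x y : Q} (h : IsWalk W x y)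
    (hP : ∀ e ∈ W, (P e.1 ↔ P e.2.2)) : (P x ↔ P y) := by
  induction W generalizing x with
  | nil => simp only [IsWalk] at h; rw [h]
  | cons e t ih =>
    obtain ⟨h1, h2⟩ := h
    rw [← h1]
    exact (hP e (by simp)).trans (ih h2 (fun e' he' => hP e' (by simp [he'])))

/-- Hierholzer assembly. -/
theorem assemble : ∀ (n : ℕ) (g : Multiset (Arc Q d)), g.card ≤ n →
    ∀ (σ W : List (Arc Q d)) (q₀ q' : Q) (M : Multiset (Arc Q d)),
    IsWalk σ q' q' → IsWalk W q₀ q' → Balanced g → (σ : Multiset (Arc Q d)) + g = M →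
    (∀ e ∈ M, e ∈ W) → (∀ e ∈ W, e ∈ M) →
    ∃ σ' : List (Arc Q d), IsWalk σ' q' q' ∧ (σ' : Multiset (Arc Q d)) = M := by
  intro n
  induction n with
  | zero =>
    intro g hg σ W q₀ q' M hσ hW hbal hsum hMW hWM
    have h0 : g = 0 := by rw [← Multiset.card_eq_zero]; omega
    subst h0
    exact ⟨σ, hσ, by simpa using hsum⟩
  | succ n ih =>
    intro g hg σ W q₀ q' M hσ hW hbal hsum hMW hWM
    rcases eq_or_ne g 0 with rfl | hne
    · exact ⟨σ, hσ, by simpa using hsum⟩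
    · -- find an attachment point
      set S : Q → Prop := fun p => p ∈ q' :: σ.map (fun e => e.2.2) with hS
      have hclaim : ∃ p, S p ∧ ∃ e ∈ g, e.1 = p := by
        by_contra hcon
        push_neg at hcon
        have hg_src : ∀ e ∈ g, ¬ S e.1 := fun e he hs => hcon e.1 hs e he rfl
        have hg_tgt : ∀ e ∈ g, ¬ S e.2.2 := by
          intro e he hs
          have hin : 0 < inM g e.2.2 := Multiset.countP_pos.mpr ⟨e, he, rfl⟩
          have hout : 0 < outM g e.2.2 := by rw [hbal]; exact hin
          obtain ⟨e', he', hep'⟩ := Multiset.countP_pos.mp hout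
          exact hg_src e' he' (by rw [hep']; exact hs)
        have hiff : ∀ e ∈ W, (S e.1 ↔ S e.2.2) := by
          intro e heW
          have heM : e ∈ M := hWM e heW
          rw [← hsum, Multiset.mem_add] at heM
          rcases heM with heσ | heg
          · have heσ' : e ∈ σ := by exact_mod_cast heσ
            constructor <;> intro
            · exact List.mem_cons_of_mem _ (List.mem_map.mpr ⟨e, heσ', rfl⟩)
            · exact arc_src_mem heσ' hσ
          · exact iff_of_false (hg_src e heg) (hg_tgt e heg)
        obtain ⟨e₀, he₀⟩ := Multiset.exists_mem_of_ne_zero hne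
        have he₀M : e₀ ∈ M := by
          rw [← hsum, Multiset.mem_add]; exact Or.inr he₀
        obtain ⟨W₁, W₂, rfl⟩ := List.append_of_mem (hMW e₀ he₀M)
        obtain ⟨m, hm1, hm2⟩ := isWalk_append.mp hW
        obtain ⟨he1, hWtail⟩ := hm2
        have hq'S : S q' := by simp [hS]
        have : S e₀.1 := by
          have hiff' : ∀ e ∈ (e₀ :: W₂), (S e.1 ↔ S e.2.2) := by
            intro e he; exact hiff e (by simp at he ⊢; tauto)
          have := walk_iff (W := e₀ :: W₂) (x := m) (y := q') ⟨he1, hWtail⟩ hiff'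
          rw [he1]
          exact this.mpr hq'S
        exact hg_src e₀ he₀ this
      obtain ⟨p, hpS, e, heg, hep⟩ := hclaim
      obtain ⟨τ, hτne, hτw, hτle⟩ := extract_cycle hbal heg hep
      obtain ⟨σ₁, σ₂, rfl, hw1, hw2⟩ := walk_decomp hσ hpS
      have hbal' : Balanced (g - (τ : Multiset (Arc Q d))) := by
        intro r
        have h1 := closed_walk_balanced hτw r
        have h2 := outM_le_of_le hτle r
        have h3 := inM_le_of_le hτle r
        rw [outM_sub hτle, inM_sub hτle, hbal r]
        omega
      have hcard' : (g - (τ : Multiset (Arc Q d))).card ≤ n := by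
        have h1 : (g - (τ : Multiset (Arc Q d))).card = g.card - τ.length := by
          obtain ⟨k, rfl⟩ := Multiset.le_iff_exists_add.mp hτle
          simp
        have h2 : 0 < τ.length := List.length_pos_iff.mpr hτne
        have h3 : τ.length ≤ g.card := by
          have := Multiset.card_le_card hτle
          simpa using this
        omega
      have hσ' : IsWalk (σ₁ ++ (τ ++ σ₂)) q' q' :=
        isWalk_append.mpr ⟨p, hw1, isWalk_append.mpr ⟨p, hτw, hw2⟩⟩
      have hsum' : ((σ₁ ++ (τ ++ σ₂)) : Multiset (Arc Q d))
          + (g - (τ : Multiset (Arc Q d))) = M := by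
        have hcoe : ((σ₁ ++ (τ ++ σ₂)) : Multiset (Arc Q d))
            = ((σ₁ ++ σ₂ : List (Arc Q d)) : Multiset (Arc Q d)) + ↑τ := by
          rw [← Multiset.coe_add, ← Multiset.coe_add, ← Multiset.coe_add]
          abel
        rw [hcoe, add_assoc, add_tsub_cancel_of_le hτle]
        exact hsum
      exact ih (g - (τ : Multiset (Arc Q d))) hcard' (σ₁ ++ (τ ++ σ₂)) W q₀ q' M hσ' hW
        hbal' hsum' hMW hWM

theorem disp_nil : disp ([] : List (Arc Q d)) = 0 := rfl

theorem disp_cons (e : Arc Q d) (t : List (Arc Q d)) : disp (e :: t) = e.2.1 + disp t := by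
  simp [disp]

theorem disp_append (l₁ l₂ : List (Arc Q d)) : disp (l₁ ++ l₂) = disp l₁ + disp l₂ := by
  simp [disp]

theorem disp_perm {l₁ l₂ : List (Arc Q d)} (h : l₁.Perm l₂) : disp l₁ = disp l₂ :=
  (h.map _).sum_eq

theorem lawful_of_dec {α : Type*} (iD : DecidableEq α) :
    @LawfulBEq α (@instBEqOfDecidableEq α iD) :=
  { eq_of_beq := fun h => of_decide_eq_true h
    rfl := fun {a} => decide_eq_true rfl }

theorem list_count_eq {α : Type*} [DecidableEq α] {inst : BEq α} (hl : @LawfulBEq α inst)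
    (l : List α) (e : α) :
    @List.count α inst e l = l.countP (fun x => decide (x = e)) := by
  rw [List.count]
  apply List.countP_congr
  intro a _
  have := @beq_iff_eq α inst hl a e
  simp [this]

theorem mcount_eq (l : List (Arc Q d)) (e : Arc Q d) :
    Multiset.count e (l : Multiset (Arc Q d)) = l.count e := by
  rw [Multiset.coe_count, list_count_eq (lawful_of_dec _),
    list_count_eq (inferInstance : LawfulBEq (Arc Q d))]

theorem isRunOn_iff {E : Finset (Arc Q d)} {π : List (Arc Q d)} {a b : Q} {v w : Vec d} :
    IsRunOn E ∅ π a v b w ↔ (∀ e ∈ π, e ∈ E) ∧ IsWalk π a b ∧ w = v + disp π := by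
  constructor
  · intro h
    induction h with
    | nil q v hv => exact ⟨by simp, rfl, by simp [disp_nil]⟩
    | cons q q' q'' v v'' z π hv he ht ih =>
      obtain ⟨ih1, ih2, ih3⟩ := ih
      refine ⟨?_, ⟨rfl, ih2⟩, ?_⟩
      · intro e he'
        rcases List.mem_cons.mp he' with rfl | h' 
        · exact he
        · exact ih1 e h'
      · rw [ih3, disp_cons, add_assoc]
  · intro ⟨h1, h2, h3⟩
    induction π generalizing a v with
    | nil =>
      simp only [IsWalk] at h2
      subst h2
      rw [h3, disp_nil, add_zero]
      exact IsRunOn.nil a v (by simp)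
    | cons e t ih =>
      obtain ⟨q1, z, q2⟩ := e
      obtain ⟨he1, he2⟩ := h2
      subst he1
      refine IsRunOn.cons _ _ _ _ _ _ _ (by simp) (h1 _ (by simp)) ?_
      exact ih (fun e he => h1 e (by simp [he])) he2 (by rw [h3, disp_cons, add_assoc])

end ClaimAux

open ClaimAux in
/-- Claim 4: from pseudo-runs `π₀, π₁, π, π'` with
`fold(π₁) - fold(π₀) - fold(π) - fold(π') ≥ 1` on every arc, one gets a pseudo-run from
`(q', Δ ⊕ (δ̄ + Δ̄))` to `(q', Δ' ⊕ (δ̄' + Δ̄'))`. -/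
theorem claim_deltas_unconstrained {d : ℕ} {Q : Type} [DecidableEq Q]
    (hd : 1 ≤ d) (E : Finset (Arc Q d)) (C C' : Finset (Fin d))
    (q q' : Q)
    (hq' : ∃ e ∈ E, e.1 = q' ∨ e.2.2 = q')
    (v v' vb δb vb' δb' Δ Δ' Δb Δb' : Vec d)
    (hv : ∀ i ∈ C, 0 ≤ v i) (hv' : ∀ i ∈ C', 0 ≤ v' i)
    (hvb : ∀ i ∉ C, 0 ≤ vb i) (hδb : ∀ i ∉ C, 0 ≤ δb i)
    (hvb' : ∀ i ∉ C', 0 ≤ vb' i) (hδb' : ∀ i ∉ C', 0 ≤ δb' i)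
    (hΔ : ∀ i ∈ C, 0 ≤ Δ i) (hΔ' : ∀ i ∈ C', 0 ≤ Δ' i)
    (π₀ π₁ π π' : List (Arc Q d))
    (hπ₀ : IsRunOn E ∅ π₀ q (glue C v vb) q' (glue C' v' vb'))
    (hπ₁ : IsRunOn E ∅ π₁ q (glue C v (vb + δb)) q' (glue C' v' (vb' + δb')))
    (hπ : IsRunOn E ∅ π q (glue C v (vb + δb)) q (glue C (v + Δ) (vb + δb + Δb)))
    (hπ' : IsRunOn E ∅ π' q' (glue C' (v' + Δ') (vb' + δb' + Δb'))
      q' (glue C' v' (vb' + δb')))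
    (hfold : ∀ e ∈ E, π₀.count e + π.count e + π'.count e + 1 ≤ π₁.count e) :
    ∃ σ, IsRunOn E ∅ σ q' (glue C Δ (δb + Δb)) q' (glue C' Δ' (δb' + Δb')) := by
  obtain ⟨hA₀, hW₀, hD₀⟩ := isRunOn_iff.mp hπ₀
  obtain ⟨hA₁, hW₁, hD₁⟩ := isRunOn_iff.mp hπ₁
  obtain ⟨hA₂, hW₂, hD₂⟩ := isRunOn_iff.mp hπ
  obtain ⟨hA₃, hW₃, hD₃⟩ := isRunOn_iff.mp hπ'
  set rest : List (Arc Q d) := π₀ ++ π ++ π' with hrest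
  have hle : (rest : Multiset (Arc Q d)) ≤ (π₁ : Multiset (Arc Q d)) := by
    rw [Multiset.le_iff_count]
    intro e
    rw [mcount_eq, mcount_eq, hrest]
    simp only [List.count_append]
    by_cases he : e ∈ E
    · have := hfold e he; omega
    · have h0 : π₀.count e = 0 := List.count_eq_zero.mpr (fun h => he (hA₀ e h))
      have h1 : π.count e = 0 := List.count_eq_zero.mpr (fun h => he (hA₂ e h))
      have h2 : π'.count e = 0 := List.count_eq_zero.mpr (fun h => he (hA₃ e h))
      omega
  set M : Multiset (Arc Q d) := (π₁ : Multiset (Arc Q d)) - ↑rest with hM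
  have hMW : ∀ e ∈ M, e ∈ π₁ := by
    intro e he
    exact Multiset.mem_coe.mp (Multiset.mem_of_le (Multiset.sub_le_self _ _) he)
  have hWM : ∀ e ∈ π₁, e ∈ M := by
    intro e he
    have heE : e ∈ E := hA₁ e he
    have := hfold e heE
    rw [← Multiset.count_pos, hM, Multiset.count_sub, mcount_eq, mcount_eq, hrest]
    simp only [List.count_append]
    omega
  have hbalM : Balanced M := by
    intro p
    have h0 := walk_imbalance hW₀ p
    have h1 := walk_imbalance hW₁ p
    have h2 := walk_imbalance hW₂ p
    have h3 := walk_imbalance hW₃ p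
    have e1 : outM M p = outL π₁ p - outL rest p := by
      rw [hM, outM_sub hle, outM_coe, outM_coe]
    have e2 : inM M p = inL π₁ p - inL rest p := by
      rw [hM, inM_sub hle, inM_coe, inM_coe]
    have e3 : outL rest p = outL π₀ p + outL π p + outL π' p := by
      rw [hrest]; simp [outL, List.countP_append]; omega
    have e4 : inL rest p = inL π₀ p + inL π p + inL π' p := by
      rw [hrest]; simp [inL, List.countP_append]; omega
    have e5 : outL rest p ≤ outL π₁ p := by
      have := outM_le_of_le hle p
      rwa [outM_coe, outM_coe] at this
    have e6 : inL rest p ≤ inL π₁ p := by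
      have := inM_le_of_le hle p
      rwa [inM_coe, inM_coe] at this
    rw [e1, e2, e3, e4] at *
    split_ifs at h0 h1 h2 h3 <;> omega
  obtain ⟨σ, hσw, hσM⟩ := assemble M.card M le_rfl [] π₁ q q' M rfl hW₁ hbalM (by simp)
    hMW hWM
  have hσE : ∀ e ∈ σ, e ∈ E := by
    intro e he
    exact hA₁ e (hMW e (hσM ▸ Multiset.mem_coe.mpr he))
  have hperm : (σ ++ rest).Perm π₁ := by
    rw [← Multiset.coe_eq_coe, ← Multiset.coe_add, hσM, hM]
    exact tsub_add_cancel_of_le hle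
  have hdisp : disp σ + (disp π₀ + disp π + disp π') = disp π₁ := by
    have := disp_perm hperm
    rw [disp_append, hrest, disp_append, disp_append] at this
    rw [← this]
    try abel
  refine ⟨σ, isRunOn_iff.mpr ⟨hσE, hσw, ?_⟩⟩
  funext i
  have k0 := congrFun hD₀ i
  have k1 := congrFun hD₁ i
  have k2 := congrFun hD₂ i
  have k3 := congrFun hD₃ i
  have k5 := congrFun hdisp i
  simp only [glue, Pi.add_apply] at k0 k1 k2 k3 k5 ⊢
  by_cases hC : i ∈ C <;> by_cases hC' : i ∈ C' <;>
    simp only [hC, hC', if_true, if_false] at k0 k1 k2 k3 ⊢ <;> linarith
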